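/- Let r, c ∈ ℕ^n be row and column projection vectors for placements of 1×1 cells in an n×n grid (a placement is a subset T ⊆ (Fin n × Fin n), with r_i = |{j : (i,j) ∈ T}| and c_j = |{i : (i,j) ∈ T}|). Let I ⊆ Fin n be a set of rows and J ⊆ Fin n a set of columns. If ∑_{i∈I} r_i − ∑_{j∉J} c_j = |I| · |J|, then every placement T with projections (r,c) satisfies: I × J ⊆ T and T ∩ ((Fin n \ I) × (Fin n \ J)) = ∅. -/

import Mathlib

theorem stmt_0 (n : ℕ) (T : Finset (Fin n × Fin n)) (r c : Fin n → ℕ)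
    (hr : ∀ i, r i = (T.filter (fun p => p.1 = i)).card)
    (hc : ∀ j, c j = (T.filter (fun p => p.2 = j)).card)
    (I J : Finset (Fin n))
    (h : (∑ i ∈ I, (r i : ℤ)) - ∑ j ∈ Jᶜ, (c j : ℤ) = (I.card : ℤ) * (J.card : ℤ)) :
    (∀ i ∈ I, ∀ j ∈ J, (i, j) ∈ T) ∧ (∀ i ∈ Iᶜ, ∀ j ∈ Jᶜ, (i, j) ∉ T) := by
  classical
  set A := T.filter (fun p => p.1 ∈ I ∧ p.2 ∈ J) with hA
  set B := T.filter (fun p => p.1 ∈ I ∧ p.2 ∉ J) with hB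
  set C := T.filter (fun p => p.1 ∉ I ∧ p.2 ∉ J) with hC
  have hrow : ∑ i ∈ I, r i = A.card + B.card := by
    have h1 : (T.filter (fun p => p.1 ∈ I)).card = ∑ i ∈ I, r i := by
      rw [Finset.card_eq_sum_card_fiberwise (f := Prod.fst) (s := T.filter (fun p => p.1 ∈ I)) (t := I)
        (fun p hp => (Finset.mem_filter.mp hp).2)]
      refine Finset.sum_congr rfl fun i hi => ?_
      rw [hr, Finset.filter_filter]
      congr 1
      apply Finset.filter_congr
      intro p _
      constructor
      · exact fun hp => hp.2
      · exact fun hp => ⟨hp ▸ hi, hp⟩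
    have h2 : A.card + B.card = (T.filter (fun p => p.1 ∈ I)).card := by
      rw [hA, hB]
      have e1 : T.filter (fun p => p.1 ∈ I ∧ p.2 ∈ J)
          = (T.filter (fun p => p.1 ∈ I)).filter (fun p => p.2 ∈ J) := by
        rw [Finset.filter_filter]
      have e2 : T.filter (fun p => p.1 ∈ I ∧ p.2 ∉ J)
          = (T.filter (fun p => p.1 ∈ I)).filter (fun p => ¬ p.2 ∈ J) := by
        rw [Finset.filter_filter]
      rw [e1, e2]
      exact Finset.card_filter_add_card_filter_not _
    omega
  have hcol : ∑ j ∈ Jᶜ, c j = B.card + C.card := by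
    have h1 : (T.filter (fun p => p.2 ∉ J)).card = ∑ j ∈ Jᶜ, c j := by
      rw [Finset.card_eq_sum_card_fiberwise (f := Prod.snd) (s := T.filter (fun p => p.2 ∉ J)) (t := Jᶜ)
        (fun p hp => Finset.mem_compl.mpr (Finset.mem_filter.mp hp).2)]
      refine Finset.sum_congr rfl fun j hj => ?_
      rw [hc, Finset.filter_filter]
      congr 1
      apply Finset.filter_congr
      intro p _
      constructor
      · exact fun hp => hp.2
      · exact fun hp => ⟨hp ▸ Finset.mem_compl.mp hj, hp⟩
    have h2 : B.card + C.card = (T.filter (fun p => p.2 ∉ J)).card := by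
      rw [hB, hC]
      have e1 : T.filter (fun p => p.1 ∈ I ∧ p.2 ∉ J)
          = (T.filter (fun p => p.2 ∉ J)).filter (fun p => p.1 ∈ I) := by
        rw [Finset.filter_filter]; apply Finset.filter_congr; intro p _; tauto
      have e2 : T.filter (fun p => p.1 ∉ I ∧ p.2 ∉ J)
          = (T.filter (fun p => p.2 ∉ J)).filter (fun p => ¬ p.1 ∈ I) := by
        rw [Finset.filter_filter]; apply Finset.filter_congr; intro p _; tauto
      rw [e1, e2]
      exact Finset.card_filter_add_card_filter_not _
    omega
  have hAsub : A ⊆ I ×ˢ J := by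
    intro p hp
    rcases Finset.mem_filter.mp hp with ⟨_, h1, h2⟩
    exact Finset.mem_product.mpr ⟨h1, h2⟩
  have hAle : A.card ≤ I.card * J.card := by
    calc A.card ≤ (I ×ˢ J).card := Finset.card_le_card hAsub
    _ = I.card * J.card := Finset.card_product I J
  have key : A.card = I.card * J.card ∧ C.card = 0 := by
    have hz : (∑ i ∈ I, (r i : ℤ)) = (A.card + B.card : ℕ) := by
      rw [← hrow]; push_cast; rfl
    have hz2 : (∑ j ∈ Jᶜ, (c j : ℤ)) = (B.card + C.card : ℕ) := by
      rw [← hcol]; push_cast; rfl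
    rw [hz, hz2] at h
    have := h
    push_cast at this
    constructor <;> omega
  have hAeq : A = I ×ˢ J := Finset.eq_of_subset_of_card_le hAsub
    (by rw [Finset.card_product, key.1])
  constructor
  · intro i hi j hj
    have : (i, j) ∈ A := hAeq ▸ Finset.mem_product.mpr ⟨hi, hj⟩
    exact (Finset.mem_filter.mp this).1
  · intro i hi j hj hT
    have : (i, j) ∈ C := Finset.mem_filter.mpr
      ⟨hT, Finset.mem_compl.mp hi, Finset.mem_compl.mp hj⟩
    rw [Finset.card_eq_zero.mp key.2] at this
    exact absurd this (Finset.notMem_empty _)
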